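/- Let T_t^Neu be the Neumann heat semigroup on (0,∞): for g : (0,∞) → ℝ, (T_t^Neu g)(x) = (4πt)^{-1/2} ∫_0^∞ [e^{-(x−y)²/(4t)} + e^{-(x+y)²/(4t)}] g(y) dy. Then for u > 0, t > 0, and H_u = 1_{[u,∞)}, one has ∫_u^∞ (1 − (T_t^Neu H_u)(x)) dx = √(t/π)(1 − e^{-u²/t}) + 2u·Φ_{2t}(2u), where Φ_{2t}(x) = ∫_x^∞ (4πt)^{-1/2} e^{-v²/(4t)} dv. -/

import Mathlib

open Real MeasureTheory Set Filter Topology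

noncomputable def nsGk (t v : ℝ) : ℝ := Real.exp (-v ^ 2 / (4 * t)) / Real.sqrt (4 * Real.pi * t)

noncomputable def nsPhi (t a : ℝ) : ℝ := ∫ v in Set.Ici a, nsGk t v

lemma nsGk_eq {t : ℝ} (ht : 0 < t) :
    nsGk t = fun v => Real.exp (-(1 / (4 * t)) * v ^ 2) / Real.sqrt (4 * Real.pi * t) := by
  funext v
  unfold nsGk
  rw [show -v ^ 2 / (4 * t) = -(1 / (4 * t)) * v ^ 2 by ring]

lemma nsGk_nonneg {t : ℝ} (v : ℝ) : 0 ≤ nsGk t v :=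
  div_nonneg (Real.exp_pos _).le (Real.sqrt_nonneg _)

lemma nsSqrt_pos {t : ℝ} (ht : 0 < t) : 0 < Real.sqrt (4 * Real.pi * t) :=
  Real.sqrt_pos.mpr (by positivity)

lemma integrable_nsGk {t : ℝ} (ht : 0 < t) : Integrable (nsGk t) := by
  rw [nsGk_eq ht]
  exact (integrable_exp_neg_mul_sq (by positivity)).div_const _

lemma continuous_nsGk {t : ℝ} : Continuous (nsGk t) := by
  unfold nsGk
  fun_prop

lemma integral_nsGk {t : ℝ} (ht : 0 < t) : ∫ v, nsGk t v = 1 := by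
  rw [nsGk_eq ht, integral_div, integral_gaussian,
    show Real.pi / (1 / (4 * t)) = 4 * Real.pi * t by field_simp]
  exact div_self (nsSqrt_pos ht).ne'

lemma nsPhi_eq {t : ℝ} (ht : 0 < t) (a : ℝ) : nsPhi t a = 1 - ∫ v in Set.Iic a, nsGk t v := by
  have h := integral_add_compl (measurableSet_Iic (a := a)) (integrable_nsGk ht)
  rw [compl_Iic, integral_nsGk ht] at h
  unfold nsPhi
  rw [integral_Ici_eq_integral_Ioi]
  linarith

lemma nsGk_neg {t : ℝ} (x : ℝ) : nsGk t (-x) = nsGk t x := by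
  unfold nsGk
  rw [neg_pow, neg_one_pow_eq_one_iff_even (by norm_num) |>.mpr (by norm_num), one_mul]

lemma nsPhi_neg {t : ℝ} (ht : 0 < t) (a : ℝ) : nsPhi t (-a) = 1 - nsPhi t a := by
  have h1 : ∫ x in Set.Iic a, nsGk t (-x) = ∫ x in Set.Ioi (-a), nsGk t x :=
    integral_comp_neg_Iic a (nsGk t)
  simp_rw [nsGk_neg] at h1
  have h2 : nsPhi t (-a) = ∫ x in Set.Ioi (-a), nsGk t x := integral_Ici_eq_integral_Ioi
  rw [h2, ← h1]
  have := nsPhi_eq ht a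
  linarith

lemma nsPhi_nonneg {t : ℝ} (a : ℝ) : 0 ≤ nsPhi t a :=
  setIntegral_nonneg measurableSet_Ici fun x _ => nsGk_nonneg x

lemma nsPhi_antitone {t : ℝ} (ht : 0 < t) {a b : ℝ} (hab : a ≤ b) : nsPhi t b ≤ nsPhi t a :=
  setIntegral_mono_set (integrable_nsGk ht).integrableOn
    (Filter.Eventually.of_forall fun x => nsGk_nonneg x)
    ((Ici_subset_Ici.mpr hab).eventuallyLE)

lemma hasDerivAt_nsPhi {t : ℝ} (ht : 0 < t) (a : ℝ) :
    HasDerivAt (nsPhi t) (-(nsGk t a)) a := by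
  have key : ∀ b, nsPhi t b = nsPhi t 0 - ∫ v in (0:ℝ)..b, nsGk t v := by
    intro b
    rw [nsPhi_eq ht b, nsPhi_eq ht 0,
      ← intervalIntegral.integral_Iic_sub_Iic (integrable_nsGk ht).integrableOn
        (integrable_nsGk ht).integrableOn]
    ring
  have hF : HasDerivAt (fun b => ∫ v in (0:ℝ)..b, nsGk t v) (nsGk t a) a :=
    intervalIntegral.integral_hasDerivAt_right
      ((integrable_nsGk ht).intervalIntegrable)
      (continuous_nsGk.stronglyMeasurableAtFilter _ _)
      continuous_nsGk.continuousAt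
  have h2 := hF.const_sub (nsPhi t 0)
  have h3 : (fun b => nsPhi t 0 - ∫ v in (0:ℝ)..b, nsGk t v) = nsPhi t := by
    funext b
    rw [← key]
  rwa [h3] at h2

lemma hasDerivAt_nsGk {t : ℝ} (ht : 0 < t) (s : ℝ) :
    HasDerivAt (nsGk t) (-(s / (2 * t)) * nsGk t s) s := by
  have h1 : HasDerivAt (fun v : ℝ => -v ^ 2 / (4 * t)) (-(2 * s) / (4 * t)) s := by
    simpa using ((hasDerivAt_pow 2 s).neg.div_const (4 * t))
  have h2 := (h1.exp).div_const (Real.sqrt (4 * Real.pi * t))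
  have h3 : Real.exp (-s ^ 2 / (4 * t)) * (-(2 * s) / (4 * t)) / Real.sqrt (4 * Real.pi * t)
      = -(s / (2 * t)) * nsGk t s := by
    unfold nsGk
    field_simp
    ring
  rw [h3] at h2
  exact h2

lemma tendsto_nsGk {t : ℝ} (ht : 0 < t) : Tendsto (nsGk t) atTop (𝓝 0) := by
  unfold nsGk
  have h0 : (0 : ℝ) = 0 / Real.sqrt (4 * Real.pi * t) := by simp
  rw [h0]
  apply Filter.Tendsto.div_const
  have hpow : Tendsto (fun v : ℝ => v ^ 2 / (4 * t)) atTop atTop :=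
    (tendsto_pow_atTop (two_ne_zero)).atTop_div_const (by positivity)
  have hneg : Tendsto (fun v : ℝ => -v ^ 2 / (4 * t)) atTop atBot := by
    simp_rw [neg_div]
    exact tendsto_neg_atTop_atBot.comp hpow
  exact Real.tendsto_exp_atBot.comp hneg

lemma nsDeriv_neg2tGk {t : ℝ} (ht : 0 < t) (x : ℝ) :
    HasDerivAt (fun v => -(2 * t * nsGk t v)) (x * nsGk t x) x := by
  have h := ((hasDerivAt_nsGk ht x).const_mul (2 * t)).neg
  have h2 : -(2 * t * (-(x / (2 * t)) * nsGk t x)) = x * nsGk t x := by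
    field_simp
  rwa [h2] at h

lemma tendsto_neg2tGk {t : ℝ} (ht : 0 < t) :
    Tendsto (fun v => -(2 * t * nsGk t v)) atTop (𝓝 0) := by
  simpa using ((tendsto_nsGk ht).const_mul (2 * t)).neg

lemma integrableOn_id_mul_nsGk {t : ℝ} (ht : 0 < t) {s : ℝ} (hs : 0 ≤ s) :
    IntegrableOn (fun v => v * nsGk t v) (Set.Ioi s) :=
  integrableOn_Ioi_deriv_of_nonneg' (fun x _ => nsDeriv_neg2tGk ht x)
    (fun x hx => mul_nonneg (hs.trans hx.le) (nsGk_nonneg x)) (tendsto_neg2tGk ht)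

lemma integral_id_mul_nsGk {t : ℝ} (ht : 0 < t) {s : ℝ} (hs : 0 ≤ s) :
    ∫ v in Set.Ioi s, v * nsGk t v = 2 * t * nsGk t s := by
  have h := integral_Ioi_of_hasDerivAt_of_nonneg' (fun x _ => nsDeriv_neg2tGk ht x)
    (fun x hx => mul_nonneg (hs.trans hx.le) (nsGk_nonneg x)) (tendsto_neg2tGk ht)
  rw [h]
  ring

lemma tendsto_nsPhi {t : ℝ} (ht : 0 < t) : Tendsto (nsPhi t) atTop (𝓝 0) := by
  have h := MeasureTheory.AECover.integral_tendsto_of_countably_generated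
    (aecover_Iic (tendsto_id (α := ℝ))) (integrable_nsGk ht)
  rw [integral_nsGk ht] at h
  have heq : nsPhi t = fun a => 1 - ∫ v in Set.Iic a, nsGk t v := funext (nsPhi_eq ht)
  rw [heq]
  simpa using (tendsto_const_nhds (x := (1:ℝ)) (f := atTop)).sub h

lemma tendsto_mul_nsPhi {t : ℝ} (ht : 0 < t) :
    Tendsto (fun s => s * nsPhi t s) atTop (𝓝 0) := by
  have hupper : Tendsto (fun s => 2 * t * nsGk t s) atTop (𝓝 0) := by
    simpa using (tendsto_nsGk ht).const_mul (2 * t)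
  refine tendsto_of_tendsto_of_tendsto_of_le_of_le' tendsto_const_nhds hupper ?_ ?_
  · filter_upwards [eventually_ge_atTop (0:ℝ)] with s hs
    exact mul_nonneg hs (nsPhi_nonneg s)
  · filter_upwards [eventually_ge_atTop (0:ℝ)] with s hs
    have h1 : s * nsPhi t s = ∫ v in Set.Ioi s, s * nsGk t v := by
      unfold nsPhi
      rw [integral_Ici_eq_integral_Ioi, MeasureTheory.integral_const_mul]
    rw [h1, ← integral_id_mul_nsGk ht hs]
    refine setIntegral_mono_on
      (((integrable_nsGk ht).const_mul s).integrableOn)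
      (integrableOn_id_mul_nsGk ht hs) measurableSet_Ioi ?_
    intro v hv
    exact mul_le_mul_of_nonneg_right (le_of_lt hv) (nsGk_nonneg v)

lemma integrable_nsGk_comp_add {t : ℝ} (ht : 0 < t) (c : ℝ) :
    Integrable (fun y : ℝ => nsGk t (y + c)) := by
  have A : MeasurableEmbedding (fun x : ℝ => x + c) :=
    (Homeomorph.addRight c).isClosedEmbedding.measurableEmbedding
  have hf := integrable_nsGk ht
  rw [← map_add_right_eq_self (volume : Measure ℝ) c] at hf
  exact A.integrable_map_iff.mp hf

lemma integral_Ici_nsGk_comp_add {t : ℝ} (a c : ℝ) :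
    ∫ y in Set.Ici a, nsGk t (y + c) = nsPhi t (a + c) := by
  have A : MeasurableEmbedding (fun x : ℝ => x + c) :=
    (Homeomorph.addRight c).isClosedEmbedding.measurableEmbedding
  have hmp : MeasurePreserving (fun x : ℝ => x + c) volume volume :=
    ⟨measurable_id.add_const c, map_add_right_eq_self (volume : Measure ℝ) c⟩
  have h := hmp.setIntegral_preimage_emb A (nsGk t) (Set.Ici (a + c))
  rw [preimage_add_const_Ici, add_sub_cancel_right] at h
  exact h

lemma ns_inner_eq {t u : ℝ} (ht : 0 < t) (hu : 0 < u) (x : ℝ) :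
    (∫ y in Set.Ioi (0 : ℝ),
        (Real.exp (-(x - y) ^ 2 / (4 * t)) + Real.exp (-(x + y) ^ 2 / (4 * t)))
          * (if u ≤ y then (1 : ℝ) else 0) / Real.sqrt (4 * Real.pi * t))
      = nsPhi t (u - x) + nsPhi t (u + x) := by
  have hfun : ∀ y : ℝ,
      (Real.exp (-(x - y) ^ 2 / (4 * t)) + Real.exp (-(x + y) ^ 2 / (4 * t)))
          * (if u ≤ y then (1 : ℝ) else 0) / Real.sqrt (4 * Real.pi * t)
        = (Set.Ici u).indicator (fun y => nsGk t (y - x) + nsGk t (y + x)) y := by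
    intro y
    by_cases h : u ≤ y
    · rw [Set.indicator_of_mem (Set.mem_Ici.mpr h), if_pos h, mul_one]
      unfold nsGk
      rw [show (x - y) ^ 2 = (y - x) ^ 2 by ring, show (x + y) ^ 2 = (y + x) ^ 2 by ring,
        add_div]
    · rw [Set.indicator_of_notMem (by simpa using h), if_neg h]
      simp
  simp_rw [hfun]
  rw [setIntegral_indicator measurableSet_Ici]
  have hinter : Set.Ioi (0:ℝ) ∩ Set.Ici u = Set.Ici u :=
    Set.inter_eq_self_of_subset_right fun y hy => lt_of_lt_of_le hu hy
  rw [hinter]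
  have hi1 : IntegrableOn (fun y : ℝ => nsGk t (y - x)) (Set.Ici u) := by
    simp_rw [sub_eq_add_neg]
    exact (integrable_nsGk_comp_add ht (-x)).integrableOn
  have hi2 : IntegrableOn (fun y : ℝ => nsGk t (y + x)) (Set.Ici u) :=
    (integrable_nsGk_comp_add ht x).integrableOn
  rw [integral_add hi1 hi2]
  congr 1
  · simp_rw [sub_eq_add_neg]
    rw [integral_Ici_nsGk_comp_add]
  · rw [integral_Ici_nsGk_comp_add]

lemma ns_sqrt_id {t : ℝ} (ht : 0 < t) :
    2 * t / Real.sqrt (4 * Real.pi * t) = Real.sqrt (t / Real.pi) := by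
  have hπ := Real.pi_pos
  have h4 : Real.sqrt (4 * Real.pi * t) * Real.sqrt (t / Real.pi) = 2 * t := by
    rw [← Real.sqrt_mul (by positivity),
      show 4 * Real.pi * t * (t / Real.pi) = (2 * t) ^ 2 by field_simp; ring]
    exact Real.sqrt_sq (by positivity)
  rw [div_eq_iff (nsSqrt_pos ht).ne']
  linarith [h4]

theorem neumann_semigroup_heaviside_variance (t u : ℝ) (ht : 0 < t) (hu : 0 < u) :
    (∫ x in Set.Ici u,
      (1 - ∫ y in Set.Ioi (0 : ℝ),
        (Real.exp (-(x - y) ^ 2 / (4 * t)) + Real.exp (-(x + y) ^ 2 / (4 * t)))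
          * (if u ≤ y then (1 : ℝ) else 0) / Real.sqrt (4 * Real.pi * t)))
    = Real.sqrt (t / Real.pi) * (1 - Real.exp (-u ^ 2 / t))
      + 2 * u * ∫ v in Set.Ici (2 * u),
          Real.exp (-v ^ 2 / (4 * t)) / Real.sqrt (4 * Real.pi * t) := by
  have hπ := Real.pi_pos
  have step1 : ∀ x : ℝ,
      (1 - ∫ y in Set.Ioi (0 : ℝ),
        (Real.exp (-(x - y) ^ 2 / (4 * t)) + Real.exp (-(x + y) ^ 2 / (4 * t)))
          * (if u ≤ y then (1 : ℝ) else 0) / Real.sqrt (4 * Real.pi * t))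
      = nsPhi t (x - u) - nsPhi t (x + u) := by
    intro x
    rw [ns_inner_eq ht hu x]
    have h1 : nsPhi t (u - x) = 1 - nsPhi t (x - u) := by
      rw [show u - x = -(x - u) by ring, nsPhi_neg ht]
    rw [h1, show u + x = x + u from add_comm u x]
    ring
  rw [setIntegral_congr_fun measurableSet_Ici (fun x _ => step1 x)]
  -- Now evaluate ∫ x in Ici u, (nsPhi t (x - u) - nsPhi t (x + u))
  have hG : ∀ s : ℝ, HasDerivAt (fun s => s * nsPhi t s - 2 * t * nsGk t s) (nsPhi t s) s := by
    intro s
    have h1 := (hasDerivAt_id s).mul (hasDerivAt_nsPhi ht s)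
    have h2 := (hasDerivAt_nsGk ht s).const_mul (2 * t)
    have h3 := h1.sub h2
    have h4 : 1 * nsPhi t s + id s * -nsGk t s - 2 * t * (-(s / (2 * t)) * nsGk t s)
        = nsPhi t s := by
      simp only [id_eq]
      field_simp
      ring
    rw [h4] at h3
    exact h3
  have hW : ∀ x ∈ Set.Ici u, HasDerivAt
      (fun x => ((x - u) * nsPhi t (x - u) - 2 * t * nsGk t (x - u))
        - ((x + u) * nsPhi t (x + u) - 2 * t * nsGk t (x + u)))
      (nsPhi t (x - u) - nsPhi t (x + u)) x := by
    intro x _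
    have a1 := (hG (x - u)).comp x ((hasDerivAt_id x).sub_const u)
    have a2 := (hG (x + u)).comp x ((hasDerivAt_id x).add_const u)
    simpa [Function.comp_def, Pi.sub_def] using a1.sub a2
  have hnonneg : ∀ x ∈ Set.Ioi u, 0 ≤ nsPhi t (x - u) - nsPhi t (x + u) := by
    intro x _
    exact sub_nonneg.mpr (nsPhi_antitone ht (by linarith))
  have hT : Tendsto (fun s => s * nsPhi t s - 2 * t * nsGk t s) atTop (𝓝 0) := by
    simpa using (tendsto_mul_nsPhi ht).sub ((tendsto_nsGk ht).const_mul (2 * t))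
  have hT1 : Tendsto (fun x : ℝ => (x - u) * nsPhi t (x - u) - 2 * t * nsGk t (x - u))
      atTop (𝓝 0) := by
    have := hT.comp (tendsto_atTop_add_const_right atTop (-u) tendsto_id)
    simpa [Function.comp_def, sub_eq_add_neg] using this
  have hT2 : Tendsto (fun x : ℝ => (x + u) * nsPhi t (x + u) - 2 * t * nsGk t (x + u))
      atTop (𝓝 0) := by
    have := hT.comp (tendsto_atTop_add_const_right atTop u tendsto_id)
    simpa [Function.comp_def] using this
  have hTW : Tendsto (fun x : ℝ => ((x - u) * nsPhi t (x - u) - 2 * t * nsGk t (x - u))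
      - ((x + u) * nsPhi t (x + u) - 2 * t * nsGk t (x + u))) atTop (𝓝 0) := by
    simpa using hT1.sub hT2
  have key := integral_Ioi_of_hasDerivAt_of_nonneg'
    (g := fun x => ((x - u) * nsPhi t (x - u) - 2 * t * nsGk t (x - u))
        - ((x + u) * nsPhi t (x + u) - 2 * t * nsGk t (x + u)))
    (fun x hx => hW x hx) hnonneg hTW
  rw [integral_Ici_eq_integral_Ioi, key]
  have hgk0 : nsGk t 0 = 1 / Real.sqrt (4 * Real.pi * t) := by
    unfold nsGk
    norm_num
  have hgk2u : nsGk t (2 * u) = Real.exp (-u ^ 2 / t) / Real.sqrt (4 * Real.pi * t) := by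
    unfold nsGk
    rw [show -(2 * u) ^ 2 / (4 * t) = -u ^ 2 / t by field_simp; ring]
  have hRHS : (∫ v in Set.Ici (2 * u),
      Real.exp (-v ^ 2 / (4 * t)) / Real.sqrt (4 * Real.pi * t)) = nsPhi t (2 * u) := rfl
  rw [hRHS]
  simp only [sub_self, show u + u = 2 * u from by ring, hgk0, hgk2u]
  rw [← ns_sqrt_id ht]
  have hc := (nsSqrt_pos ht).ne'
  field_simp
  ring
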